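/- Let Q ⊂ ℝⁿ be prox-regular at x̄ for v̄ ∈ N_Q(x̄) and let M be a locally minimal identifiable set (relative to Q) at x̄ for v̄. For λ, ε > 0 define U := {x + λv : x ∈ M, v ∈ N_Q(x), |x − x̄| < ε, |v − v̄| < ε}. Then for all sufficiently small λ, ε > 0 we have x̄ + λv̄ ∈ int U, and M admits the representation M = P_Q(U) locally around x̄, where P_Q(U) is the set of nearest points in Q of points of U. -/

import Mathlib

open Filter Topology Metric Set
open scoped RealInnerProductSpace

noncomputable section

/-- `ℝⁿ` with the Euclidean structure. -/
abbrev Euc (n : ℕ) : Type := EuclideanSpace ℝ (Fin n)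

section Defs

variable {H : Type*} [NormedAddCommGroup H] [InnerProductSpace ℝ H]
variable {H' : Type*} [NormedAddCommGroup H'] [InnerProductSpace ℝ H']

/-- The inclusion `M ⊆ Q` holds locally around the point `x`. -/
def LocallyIncl {α : Type*} [TopologicalSpace α] (M Q : Set α) (x : α) : Prop :=
  ∃ U ∈ 𝓝 x, M ∩ U ⊆ Q ∩ U

/-- The equality `M = Q` holds locally around the point `x`. -/
def LocallyEq {α : Type*} [TopologicalSpace α] (M Q : Set α) (x : α) : Prop :=
  ∃ U ∈ 𝓝 x, M ∩ U = Q ∩ U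

/-- The graph of a set-valued mapping. -/
def svGraph (G : H → Set H') : Set (H × H') := {p | p.2 ∈ G p.1}

/-- `G⁻¹(W)`, the preimage of a set `W` under the set-valued mapping `G`. -/
def svPreimage (G : H → Set H') (W : Set H') : Set H := {x | (G x ∩ W).Nonempty}

/-- `M` is identifiable relative to the set-valued mapping `G` at `x` for `v ∈ G x`:
the inclusion `gph G ⊆ M × H'` holds locally around `(x, v)`. -/
def IdentifiableRel (G : H → Set H') (M : Set H) (x : H) (v : H') : Prop :=
  LocallyIncl (svGraph G) (M ×ˢ (univ : Set H')) (x, v)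

/-- `M` is necessary relative to `G` at `x` for `v ∈ G x`: `x ∈ M` and the function
`y ↦ d(v, G y)`, restricted to `M`, is continuous at `x`. -/
def NecessaryRel (G : H → Set H') (M : Set H) (x : H) (v : H') : Prop :=
  x ∈ M ∧ ContinuousWithinAt (fun y => EMetric.infEdist v (G y)) M x

/-- `M` is a locally minimal identifiable set relative to `G` at `x` for `v`. -/
def LocallyMinimalIdentifiableRel (G : H → Set H') (M : Set H) (x : H) (v : H') : Prop :=
  IdentifiableRel G M x v ∧ ∀ M' : Set H, IdentifiableRel G M' x v → LocallyIncl M M' x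

/-- `M` is a locally maximal necessary set relative to `G` at `x` for `v`. -/
def LocallyMaximalNecessaryRel (G : H → Set H') (M : Set H) (x : H) (v : H') : Prop :=
  NecessaryRel G M x v ∧ ∀ M' : Set H, NecessaryRel G M' x v → LocallyIncl M' M x

/-- The proximal normal cone to `Q` at `x`. -/
def proxNormalCone (Q : Set H) (x : H) : Set H :=
  {v | x ∈ Q ∧ ∃ r > (0:ℝ), ∀ y ∈ Q, dist (x + r⁻¹ • v) x ≤ dist (x + r⁻¹ • v) y}

/-- The Fréchet normal cone to `Q` at `x`. -/
def frechetNormalCone (Q : Set H) (x : H) : Set H :=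
  {v | x ∈ Q ∧ ∀ ε > (0:ℝ), ∃ δ > (0:ℝ), ∀ y ∈ Q, dist y x < δ → ⟪v, y - x⟫ ≤ ε * ‖y - x‖}

/-- The limiting normal cone to `Q` at `x`. -/
def limitingNormalCone (Q : Set H) (x : H) : Set H :=
  {v | ∃ xs vs : ℕ → H, (∀ i, vs i ∈ frechetNormalCone Q (xs i)) ∧
        Tendsto xs atTop (𝓝 x) ∧ Tendsto vs atTop (𝓝 v)}

/-- `Q` is locally closed at `x`. -/
def LocallyClosedAt (Q : Set H) (x : H) : Prop :=
  ∃ ε > (0:ℝ), IsClosed (Q ∩ closedBall x ε)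

/-- `x` is the unique nearest point of `S` to `p`. -/
def IsUniqueNearestPt (S : Set H) (p x : H) : Prop :=
  x ∈ S ∧ ∀ y ∈ S, y ≠ x → dist p x < dist p y

/-- `Q` is prox-regular at `xb` for `vb`. -/
def ProxRegularAt (Q : Set H) (xb vb : H) : Prop :=
  LocallyClosedAt Q xb ∧ ∃ ε > (0:ℝ), ∃ r > (0:ℝ), ∀ x ∈ Q,
    ∀ v ∈ limitingNormalCone Q x, dist x xb < ε → dist v vb < ε →
      IsUniqueNearestPt (Q ∩ closedBall xb ε) (x + r⁻¹ • v) x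

/-- `Q` is Clarke regular at `x`. -/
def ClarkeRegularAt (Q : Set H) (x : H) : Prop :=
  LocallyClosedAt Q x ∧ limitingNormalCone Q x = frechetNormalCone Q x

/-- `M` is identifiable relative to the set `Q` at `xb` for `vb ∈ N_Q(xb)`:
the graph of the limiting normal cone mapping is contained in `M × H` locally
around `(xb, vb)`. -/
def IdentifiableIn (Q M : Set H) (xb vb : H) : Prop :=
  ∃ W ∈ 𝓝 (xb, vb), ∀ p : H × H, p ∈ W → p.1 ∈ Q → p.2 ∈ limitingNormalCone Q p.1 → p.1 ∈ M

/-- `M` is a locally minimal identifiable set relative to the set `Q` at `xb` for `vb`. -/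
def LocallyMinimalIdentifiableIn (Q M : Set H) (xb vb : H) : Prop :=
  IdentifiableIn Q M xb vb ∧ ∀ M' : Set H, IdentifiableIn Q M' xb vb → LocallyIncl M M' xb

/-- The (Bouligand) tangent cone to `Q` at `xb`. -/
def tangentConeB (Q : Set H) (xb : H) : Set H :=
  {w | ∃ (xs : ℕ → H) (ts : ℕ → ℝ), (∀ i, xs i ∈ Q) ∧ (∀ i, 0 < ts i) ∧
      Tendsto ts atTop (𝓝 0) ∧ Tendsto xs atTop (𝓝 xb) ∧
      Tendsto (fun i => (ts i)⁻¹ • (xs i - xb)) atTop (𝓝 w)}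

/-- The set of nearest points of `Q` to `y`. -/
def nearestPts (Q : Set H) (y : H) : Set H := {z | z ∈ Q ∧ ∀ w ∈ Q, dist y z ≤ dist y w}

/-- A tangent vector `w ∈ T_Q(xb)` is smoothly derivable. -/
def SmoothlyDerivableVec (Q : Set H) (xb w : H) : Prop :=
  ∃ ε > (0:ℝ), ∃ γ : ℝ → H, ContDiffOn ℝ 1 γ (Ico (0:ℝ) ε) ∧ γ 0 = xb ∧
    (∀ t ∈ Ico (0:ℝ) ε, γ t ∈ Q) ∧
    Tendsto (fun t => t⁻¹ • (γ t - xb)) (𝓝[>] (0:ℝ)) (𝓝 w)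

/-- `Q` is smoothly derivable at `xb`: every tangent vector is smoothly derivable. -/
def SmoothlyDerivableAt (Q : Set H) (xb : H) : Prop :=
  ∀ w ∈ tangentConeB Q xb, SmoothlyDerivableVec Q xb w

/-- The normal cone of convex analysis. -/
def convNormalCone (C : Set H) (x : H) : Set H := {v | ∀ y ∈ C, ⟪v, y - x⟫ ≤ 0}

/-- The tangent cone of convex analysis. -/
def convTangentCone (C : Set H) (x : H) : Set H :=
  closure {w | ∃ l : ℝ, 0 ≤ l ∧ ∃ y ∈ C, w = l • (y - x)}

/-- A convex polyhedron: a finite intersection of closed halfspaces. -/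
def IsPolyhedron (Q : Set H) : Prop :=
  ∃ (k : ℕ) (a : Fin k → H) (b : Fin k → ℝ), Q = {x | ∀ i, ⟪a i, x⟫ ≤ b i}

/-- The relative interior of a set: interior relative to its affine span. -/
def relInterior (S : Set H) : Set H :=
  {v | v ∈ S ∧ ∃ ε > (0:ℝ), ∀ y ∈ (affineSpan ℝ S : Set H), dist y v < ε → y ∈ S}

/-- Inner semicontinuity at `xb` of a set-valued map restricted to `S`. -/
def InnerSemicontinuousOnAt (T : H → Set H') (S : Set H) (xb : H) : Prop :=
  ∀ xs : ℕ → H, (∀ i, xs i ∈ S) → Tendsto xs atTop (𝓝 xb) →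
    ∀ w ∈ T xb, ∃ ws : ℕ → H', (∀ i, ws i ∈ T (xs i)) ∧ Tendsto ws atTop (𝓝 w)

/-- `M` is a `C²` submanifold of the ambient space around the point `xb`. -/
def IsC2SubmanifoldAround (M : Set H) (xb : H) : Prop :=
  ∃ (m : ℕ) (F : H → EuclideanSpace ℝ (Fin m)) (U : Set H), IsOpen U ∧ xb ∈ U ∧
    ContDiffOn ℝ 2 F U ∧ Function.Surjective (fderiv ℝ F xb) ∧
    M ∩ U = {x ∈ U | F x = 0}

/-- `Q` is partly smooth with respect to the manifold `M` at `xb` for `vb`. -/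
def PartlySmoothAt (Q M : Set H) (xb vb : H) : Prop :=
  ProxRegularAt Q xb vb ∧
  (Submodule.span ℝ (frechetNormalCone Q xb) : Set H) = limitingNormalCone M xb ∧
  ∃ V ∈ 𝓝 vb, InnerSemicontinuousOnAt (fun x => V ∩ limitingNormalCone Q x) M xb

/-- `ℝⁿ × ℝ` with the Euclidean (ℓ²) structure, hosting epigraphs. -/
abbrev PairL2 (H : Type*) [NormedAddCommGroup H] : Type _ := WithLp 2 (H × ℝ)

/-- Build a point of `PairL2 H` from its components. -/
def pmk (x : H) (r : ℝ) : PairL2 H := (WithLp.equiv 2 (H × ℝ)).symm (x, r)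

/-- The epigraph of an extended-real-valued function. -/
def epigraph (f : H → EReal) : Set (PairL2 H) :=
  {p | f ((WithLp.equiv 2 (H × ℝ)) p).1 ≤ (((WithLp.equiv 2 (H × ℝ)) p).2 : EReal)}

/-- The limiting subdifferential. -/
def limSubdiff (f : H → EReal) (x : H) : Set H :=
  {v | ∃ r : ℝ, f x = (r : EReal) ∧
      pmk v (-1) ∈ limitingNormalCone (epigraph f) (pmk x r)}

/-- The horizon subdifferential. -/
def horizonSubdiff (f : H → EReal) (x : H) : Set H :=
  {v | ∃ r : ℝ, f x = (r : EReal) ∧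
      pmk v 0 ∈ limitingNormalCone (epigraph f) (pmk x r)}

/-- The proximal subdifferential. -/
def proxSubdiff (f : H → EReal) (x : H) : Set H :=
  {v | ∃ r : ℝ, f x = (r : EReal) ∧
      pmk v (-1) ∈ proxNormalCone (epigraph f) (pmk x r)}

/-- A function is Clarke regular at `x` if its epigraph is Clarke regular at `(x, f x)`. -/
def ClarkeRegularFn (f : H → EReal) (x : H) : Prop :=
  ∃ r : ℝ, f x = (r : EReal) ∧ ClarkeRegularAt (epigraph f) (pmk x r)

/-- `M` is identifiable at `xb` for `vb` relative to the function `f` with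
subdifferential mapping `D`: for every sequence `(xᵢ, f xᵢ, vᵢ) → (xb, f xb, vb)`
with `vᵢ ∈ D xᵢ`, the points `xᵢ` lie in `M` for all large `i`. -/
def IdentifiableFn (f : H → EReal) (D : H → Set H) (M : Set H) (xb vb : H) : Prop :=
  ∀ xs vs : ℕ → H, Tendsto xs atTop (𝓝 xb) →
    Tendsto (fun i => f (xs i)) atTop (𝓝 (f xb)) →
    Tendsto vs atTop (𝓝 vb) → (∀ i, vs i ∈ D (xs i)) →
    ∀ᶠ i in atTop, xs i ∈ M

/-- `M` is a locally minimal identifiable set relative to `f` (with subdifferential `D`). -/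
def LocallyMinimalIdentifiableFn (f : H → EReal) (D : H → Set H) (M : Set H)
    (xb vb : H) : Prop :=
  IdentifiableFn f D M xb vb ∧ ∀ M' : Set H, IdentifiableFn f D M' xb vb → LocallyIncl M M' xb

/-- The subdifferential of convex analysis for an extended-real-valued function. -/
def convexSubdiff (f : H → EReal) (x : H) : Set H :=
  {v | ∃ r : ℝ, f x = (r : EReal) ∧ ∀ y : H, ((r + ⟪v, y - x⟫ : ℝ) : EReal) ≤ f y}

/-- Convexity for an extended-real-valued function. -/
def ERealConvexOn (f : H → EReal) : Prop :=
  ∀ x y : H, ∀ a b : ℝ, 0 ≤ a → 0 ≤ b → a + b = 1 →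
    f (a • x + b • y) ≤ (a : EReal) * f x + (b : EReal) * f y

/-- A piecewise linear-quadratic function: its domain is the union of finitely many
convex polyhedra, on each of which it agrees with a polynomial of degree at most 2. -/
def IsPiecewiseLinearQuadratic (f : H → EReal) : Prop :=
  ∃ (k : ℕ) (C : Fin k → Set H), (∀ i, IsPolyhedron (C i)) ∧
    ({x | f x ≠ ⊤} = ⋃ i, C i) ∧
    ∀ i, ∃ (B : H →ₗ[ℝ] H →ₗ[ℝ] ℝ) (l : H →ₗ[ℝ] ℝ) (c : ℝ),
      ∀ x ∈ C i, f x = ((B x x + l x + c : ℝ) : EReal)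


/-- Outer semicontinuity of a set-valued mapping (at every point). -/
def OuterSemicontinuousSV (G : H → Set H') : Prop :=
  ∀ (x : H) (v : H') (xs : ℕ → H) (vs : ℕ → H'),
    Tendsto xs atTop (𝓝 x) → Tendsto vs atTop (𝓝 v) →
    (∀ i, vs i ∈ G (xs i)) → v ∈ G x

end Defs


section MyHelpers
variable {H : Type*} [NormedAddCommGroup H] [InnerProductSpace ℝ H]

lemma my_frechet_sub_limiting {Q : Set H} {x v : H} (h : v ∈ frechetNormalCone Q x) :
    v ∈ limitingNormalCone Q x :=
  ⟨fun _ => x, fun _ => v, fun _ => h, tendsto_const_nhds, tendsto_const_nhds⟩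

lemma my_dist_add_smul (x v : H) {a : ℝ} (ha : 0 ≤ a) :
    dist (x + a • v) x = a * ‖v‖ := by
  rw [dist_eq_norm, add_sub_cancel_left, norm_smul, Real.norm_eq_abs, abs_of_nonneg ha]

lemma my_prox_mem_frechet {Q : Set H} {x z : H} {lam : ℝ} (hlam : 0 < lam)
    (hx : x ∈ Q) (hnear : ∀ y ∈ Q, dist z x ≤ dist z y) :
    lam⁻¹ • (z - x) ∈ frechetNormalCone Q x := by
  refine ⟨hx, fun ε hε => ⟨2 * lam * ε, by positivity, fun y hy hyd => ?_⟩⟩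
  have h1 : ‖z - x‖ ≤ ‖z - y‖ := by
    have := hnear y hy; rwa [dist_eq_norm, dist_eq_norm] at this
  have h2 : ‖z - x‖^2 ≤ ‖z - y‖^2 := by
    have := norm_nonneg (z - x); nlinarith
  have h3 : ‖z - y‖^2 = ‖z - x‖^2 - 2*⟪z - x, y - x⟫ + ‖y - x‖^2 := by
    have hzy : z - y = (z - x) - (y - x) := by abel
    rw [hzy, norm_sub_sq_real]
  have key : ⟪z - x, y - x⟫ ≤ ‖y - x‖^2 / 2 := by linarith
  have hd : ‖y - x‖ < 2 * lam * ε := by rwa [dist_eq_norm] at hyd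
  rw [real_inner_smul_left]
  have hyn : (0:ℝ) ≤ ‖y - x‖ := norm_nonneg _
  have hli : (0:ℝ) < lam⁻¹ := by positivity
  have hc : lam⁻¹ * lam = 1 := inv_mul_cancel₀ hlam.ne'
  nlinarith [mul_le_mul_of_nonneg_left key hli.le]

lemma my_nearest_scale {S : Set H} {x v : H} {r lam : ℝ} (hr : 0 < r) (hlam : 0 < lam)
    (hlr : lam ≤ r⁻¹) (h : IsUniqueNearestPt S (x + r⁻¹ • v) x) :
    ∀ y ∈ S, y ≠ x → dist (x + lam • v) x < dist (x + lam • v) y := by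
  intro y hy hne
  have hri : (0:ℝ) < r⁻¹ := by positivity
  have h2 := h.2 y hy hne
  rw [my_dist_add_smul x v hri.le] at h2
  rw [my_dist_add_smul x v hlam.le]
  have hd : dist (x + r⁻¹ • v) (x + lam • v) = (r⁻¹ - lam) * ‖v‖ := by
    rw [dist_eq_norm]
    have hv : x + r⁻¹ • v - (x + lam • v) = (r⁻¹ - lam) • v := by
      rw [sub_smul]; abel
    rw [hv, norm_smul, Real.norm_eq_abs, abs_of_nonneg (by linarith)]
  have htri : dist (x + r⁻¹ • v) y ≤ (r⁻¹ - lam) * ‖v‖ + dist (x + lam • v) y := by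
    calc dist (x + r⁻¹ • v) y ≤ dist (x + r⁻¹ • v) (x + lam • v) + dist (x + lam • v) y :=
        dist_triangle _ _ _
      _ = (r⁻¹ - lam) * ‖v‖ + dist (x + lam • v) y := by rw [hd]
  nlinarith [norm_nonneg v]

end MyHelpers

/-- representing locally minimal identifiable sets as projections of
neighborhoods. -/
theorem statement14 {n : ℕ} (Q : Set (Euc n)) (xb vb : Euc n)
    (hvb : vb ∈ limitingNormalCone Q xb) (hprox : ProxRegularAt Q xb vb)
    (M : Set (Euc n)) (hMQ : M ⊆ Q)
    (hmin : LocallyMinimalIdentifiableIn Q M xb vb) :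
    ∃ lam0 > (0:ℝ), ∃ eps0 > (0:ℝ), ∀ lam, 0 < lam → lam < lam0 →
      ∀ eps, 0 < eps → eps < eps0 → ∀ U : Set (Euc n),
        U = {z | ∃ x ∈ M, ∃ v ∈ limitingNormalCone Q x,
              dist x xb < eps ∧ dist v vb < eps ∧ z = x + lam • v} →
        (xb + lam • vb ∈ interior U ∧ LocallyEq M (⋃ y ∈ U, nearestPts Q y) xb) := by
  classical
  obtain ⟨⟨εc, hεc, hclosed⟩, ε, hε, r, hr, hreg⟩ := hprox
  set ε' : ℝ := min ε εc with hε'def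
  have hε' : 0 < ε' := lt_min hε hεc
  have hε'ε : ε' ≤ ε := min_le_left _ _
  have hε'c : ε' ≤ εc := min_le_right _ _
  obtain ⟨xs0, vs0, hvs0, hxs0, -⟩ := id hvb
  have hxbQ : xb ∈ Q := by
    have hmem : ∀ᶠ i in atTop, xs0 i ∈ Q ∩ closedBall xb εc := by
      filter_upwards [hxs0.eventually_mem (Metric.closedBall_mem_nhds xb hεc)] with i hi
      exact ⟨(hvs0 i).1, hi⟩
    exact (hclosed.mem_of_tendsto hxs0 hmem).1
  set S : Set (Euc n) := Q ∩ closedBall xb ε' with hSdef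
  have hSclosed : IsClosed S := by
    have hS2 : S = (Q ∩ closedBall xb εc) ∩ closedBall xb ε' := by
      ext y
      constructor
      · rintro ⟨h1, h2⟩
        exact ⟨⟨h1, closedBall_subset_closedBall hε'c h2⟩, h2⟩
      · rintro ⟨⟨h1, -⟩, h2⟩; exact ⟨h1, h2⟩
    rw [hS2]; exact hclosed.inter isClosed_closedBall
  have hScpt : IsCompact S :=
    (isCompact_closedBall xb ε').of_isClosed_subset hSclosed inter_subset_right
  have hxbS : xb ∈ S := ⟨hxbQ, mem_closedBall_self hε'.le⟩
  have hSball : S ⊆ Q ∩ closedBall xb ε := fun y hy =>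
    ⟨hy.1, closedBall_subset_closedBall hε'ε hy.2⟩
  set K : ℝ := ‖vb‖ + ε with hKdef
  have hK1 : (0:ℝ) < K + 1 := by positivity
  refine ⟨min r⁻¹ (ε' / (8 * (K + 1))), lt_min (by positivity) (by positivity),
    min ε (ε' / 8), lt_min hε (by positivity), ?_⟩
  intro lam hlam hlam2 eps heps heps2 U hU
  have hlamr : lam ≤ r⁻¹ := le_of_lt (hlam2.trans_le (min_le_left _ _))
  have hlamK : lam * (K + 1) < ε' / 8 := by
    have h1 : lam < ε' / (8 * (K + 1)) := hlam2.trans_le (min_le_right _ _)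
    have h2 : lam * (8 * (K + 1)) < ε' := (lt_div_iff₀ (by positivity)).mp h1
    nlinarith
  have hepsε : eps < ε := heps2.trans_le (min_le_left _ _)
  have heps8 : eps < ε' / 8 := heps2.trans_le (min_le_right _ _)
  have hlamvb : lam * ‖vb‖ < ε' / 8 := by
    have hvbK : ‖vb‖ < K + 1 := by simp only [hKdef]; linarith
    nlinarith [norm_nonneg vb]
  have hnormv : ∀ v : Euc n, dist v vb < eps → lam * ‖v‖ < ε' / 8 := by
    intro v hv
    have h1 : ‖v‖ ≤ ‖v - vb‖ + ‖vb‖ := by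
      calc ‖v‖ = ‖v - vb + vb‖ := by rw [sub_add_cancel]
        _ ≤ ‖v - vb‖ + ‖vb‖ := norm_add_le _ _
    rw [dist_eq_norm] at hv
    have hvK : ‖v‖ < K + 1 := by simp only [hKdef]; linarith
    nlinarith [norm_nonneg v]
  -- Key: the unique nearest point of `Q` to `x + lam • v` is `x`.
  have hproj : ∀ x ∈ Q, ∀ v ∈ limitingNormalCone Q x, dist x xb < ε' / 4 → dist v vb < eps →
      nearestPts Q (x + lam • v) = {x} := by
    intro x hxQ v hvN hxd hvd
    have hxε : dist x xb < ε := by linarith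
    have hvε : dist v vb < ε := by linarith
    have huniq := my_nearest_scale hr hlam hlamr (hreg x hxQ v hvN hxε hvε)
    have hlv : lam * ‖v‖ < ε' / 8 := hnormv v hvd
    have hdzx : dist (x + lam • v) x = lam * ‖v‖ := my_dist_add_smul x v hlam.le
    have hball : ∀ y : Euc n, dist (x + lam • v) y ≤ lam * ‖v‖ → y ∈ closedBall xb ε := by
      intro y hy
      have h4 : dist y xb ≤ dist y (x + lam • v) + dist (x + lam • v) x + dist x xb :=
        dist_triangle4 y (x + lam • v) x xb
      rw [dist_comm y (x + lam • v)] at h4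
      rw [mem_closedBall]
      linarith
    have hxmem : ∀ y ∈ Q, dist (x + lam • v) x ≤ dist (x + lam • v) y := by
      intro y hyQ
      by_contra hcon
      push_neg at hcon
      rcases eq_or_ne y x with rfl | hyx
      · exact absurd hcon (lt_irrefl _)
      · have hyb : y ∈ closedBall xb ε := hball y (by rw [hdzx] at hcon; exact hcon.le)
        have := huniq y ⟨hyQ, hyb⟩ hyx
        linarith
    ext y
    simp only [nearestPts, mem_setOf_eq, mem_singleton_iff]
    constructor
    · rintro ⟨hyQ, hymin⟩
      by_contra hyx
      have hle : dist (x + lam • v) y ≤ lam * ‖v‖ := by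
        have := hymin x hxQ; rw [hdzx] at this; exact this
      have hyb : y ∈ closedBall xb ε := hball y hle
      have := huniq y ⟨hyQ, hyb⟩ hyx
      rw [hdzx] at this
      linarith
    · rintro rfl
      exact ⟨hxQ, hxmem⟩
  obtain ⟨W, hW, hident⟩ := hmin.1
  have hz0int : xb + lam • vb ∈ interior U := by
    have hsub : ∃ δ > (0:ℝ), ball (xb + lam • vb) δ ⊆ U := by
      by_contra hcon
      push_neg at hcon
      have hex : ∀ i : ℕ, ∃ z, z ∈ ball (xb + lam • vb) (1 / ((i : ℝ) + 1)) ∧ z ∉ U := by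
        intro i
        obtain ⟨z, hz1, hz2⟩ := not_subset.mp (hcon (1 / ((i : ℝ) + 1)) (by positivity))
        exact ⟨z, hz1, hz2⟩
      choose zs hzb hznU using hex
      have hzs : Tendsto zs atTop (𝓝 (xb + lam • vb)) := by
        rw [tendsto_iff_dist_tendsto_zero]
        refine squeeze_zero (fun i => dist_nonneg) (fun i => (mem_ball.mp (hzb i)).le) ?_
        exact tendsto_one_div_add_atTop_nhds_zero_nat
      have hexmin : ∀ i : ℕ, ∃ x ∈ S, ∀ y ∈ S, dist (zs i) x ≤ dist (zs i) y := by
        intro i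
        obtain ⟨x, hxS, hmin'⟩ := hScpt.exists_isMinOn ⟨xb, hxbS⟩
          ((continuous_const.dist continuous_id).continuousOn)
        exact ⟨x, hxS, fun y hy => hmin' hy⟩
      choose xs hxsS hxsmin using hexmin
      obtain ⟨xstar, hxstarS, φ, hφ, hconv⟩ := hScpt.tendsto_subseq hxsS
      have hzφ : Tendsto (fun j => zs (φ j)) atTop (𝓝 (xb + lam • vb)) :=
        hzs.comp hφ.tendsto_atTop
      have hxstar : xstar = xb := by
        have hmin0 : ∀ y ∈ S, dist (xb + lam • vb) xstar ≤ dist (xb + lam • vb) y := by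
          intro y hy
          exact le_of_tendsto_of_tendsto' (hzφ.dist hconv) (hzφ.dist tendsto_const_nhds)
            (fun j => hxsmin (φ j) y hy)
        by_contra hne
        have huniq := my_nearest_scale hr hlam hlamr
          (hreg xb hxbQ vb hvb (by simpa using hε) (by simpa using hε))
        have h1 := huniq xstar (hSball hxstarS) hne
        have h2 := hmin0 xb hxbS
        linarith
      rw [hxstar] at hconv
      set vs : ℕ → Euc n := fun i => lam⁻¹ • (zs i - xs i) with hvsdef
      have hvφ : Tendsto (fun j => vs (φ j)) atTop (𝓝 vb) := by
        have h1 : Tendsto (fun j => zs (φ j) - xs (φ j)) atTop (𝓝 (lam • vb)) := by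
          have h0 := hzφ.sub hconv
          simpa [add_sub_cancel_left] using h0
        have h2 := h1.const_smul (lam⁻¹)
        simpa [hvsdef, smul_smul, inv_mul_cancel₀ hlam.ne'] using h2
      have hev1 : ∀ᶠ j in atTop, dist (zs (φ j)) (xb + lam • vb) < ε' / 8 := by
        filter_upwards [hzφ.eventually_mem
          (Metric.ball_mem_nhds _ (by positivity : (0:ℝ) < ε' / 8))] with j hj
        exact mem_ball.mp hj
      have hev2 : ∀ᶠ j in atTop, (xs (φ j), vs (φ j)) ∈ W :=
        (hconv.prodMk_nhds hvφ).eventually_mem hW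
      have hev3 : ∀ᶠ j in atTop, dist (xs (φ j)) xb < eps := by
        filter_upwards [hconv.eventually_mem (Metric.ball_mem_nhds _ heps)] with j hj
        exact mem_ball.mp hj
      have hev4 : ∀ᶠ j in atTop, dist (vs (φ j)) vb < eps := by
        filter_upwards [hvφ.eventually_mem (Metric.ball_mem_nhds _ heps)] with j hj
        exact mem_ball.mp hj
      obtain ⟨j, h1, h2, h3, h4⟩ := (hev1.and (hev2.and (hev3.and hev4))).exists
      have hb3 : dist (xb + lam • vb) xb = lam * ‖vb‖ := my_dist_add_smul xb vb hlam.le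
      have hb4 : dist (zs (φ j)) (xs (φ j)) < ε' / 4 := by
        have hb1 : dist (zs (φ j)) (xs (φ j)) ≤ dist (zs (φ j)) xb := hxsmin (φ j) xb hxbS
        have hb2 : dist (zs (φ j)) xb ≤
            dist (zs (φ j)) (xb + lam • vb) + dist (xb + lam • vb) xb := dist_triangle _ _ _
        linarith
      have hglob : ∀ y ∈ Q, dist (zs (φ j)) (xs (φ j)) ≤ dist (zs (φ j)) y := by
        intro y hyQ
        by_contra hcon2
        push_neg at hcon2
        have hyb : y ∈ S := by
          refine ⟨hyQ, ?_⟩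
          rw [mem_closedBall]
          have h5 : dist y xb ≤
              dist y (zs (φ j)) + dist (zs (φ j)) (xb + lam • vb) + dist (xb + lam • vb) xb :=
            dist_triangle4 y (zs (φ j)) (xb + lam • vb) xb
          rw [dist_comm y (zs (φ j))] at h5
          linarith
        exact absurd (hxsmin (φ j) y hyb) (not_le.mpr hcon2)
      have hxQ' : xs (φ j) ∈ Q := (hxsS (φ j)).1
      have hvN' : vs (φ j) ∈ limitingNormalCone Q (xs (φ j)) :=
        my_frechet_sub_limiting (my_prox_mem_frechet hlam hxQ' hglob)
      have hxM : xs (φ j) ∈ M := hident (xs (φ j), vs (φ j)) h2 hxQ' hvN'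
      have hzU : zs (φ j) ∈ U := by
        rw [hU]
        refine ⟨xs (φ j), hxM, vs (φ j), hvN', h3, h4, ?_⟩
        simp [hvsdef, smul_smul, mul_inv_cancel₀ hlam.ne']
      exact hznU (φ j) hzU
    obtain ⟨δ, hδ, hsub'⟩ := hsub
    exact mem_interior.mpr ⟨ball (xb + lam • vb) δ, hsub', isOpen_ball, mem_ball_self hδ⟩
  have hM'id : IdentifiableIn Q {y | ∃ v ∈ limitingNormalCone Q y, dist v vb < eps} xb vb := by
    refine ⟨univ ×ˢ ball vb eps, prod_mem_nhds univ_mem (ball_mem_nhds vb heps), ?_⟩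
    rintro ⟨p1, p2⟩ hp hpQ hpN
    exact ⟨p2, hpN, mem_ball.mp hp.2⟩
  obtain ⟨U', hU'n, hU'sub⟩ := hmin.2 _ hM'id
  obtain ⟨ρ, hρ, hρsub⟩ := Metric.mem_nhds_iff.mp hU'n
  set ρ' : ℝ := min ρ (min eps (ε' / 8)) with hρ'def
  have hρ' : 0 < ρ' := lt_min hρ (lt_min heps (by positivity))
  have hρ'ρ : ρ' ≤ ρ := min_le_left _ _
  have hρ'e : ρ' ≤ eps := le_trans (min_le_right _ _) (min_le_left _ _)
  have hρ'8 : ρ' ≤ ε' / 8 := le_trans (min_le_right _ _) (min_le_right _ _)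
  refine ⟨hz0int, ball xb ρ', ball_mem_nhds xb hρ', ?_⟩
  ext x
  simp only [mem_inter_iff, mem_ball]
  constructor
  · rintro ⟨hxM, hxb⟩
    refine ⟨?_, hxb⟩
    have hxU' : x ∈ U' := hρsub (mem_ball.mpr (hxb.trans_le hρ'ρ))
    obtain ⟨v, hvN, hvd⟩ := (hU'sub ⟨hxM, hxU'⟩).1
    have hxQ' : x ∈ Q := hMQ hxM
    have hnear := hproj x hxQ' v hvN (by linarith) hvd
    have hyU2 : x + lam • v ∈ U := by
      rw [hU]; exact ⟨x, hxM, v, hvN, by linarith, hvd, rfl⟩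
    have hxn : x ∈ nearestPts Q (x + lam • v) := by rw [hnear]; rfl
    exact mem_biUnion hyU2 hxn
  · rintro ⟨hxP, hxb⟩
    refine ⟨?_, hxb⟩
    obtain ⟨y, hyU, hxnear⟩ := mem_iUnion₂.mp hxP
    rw [hU] at hyU
    obtain ⟨m, hmM, v, hvN, hmd, hvd, rfl⟩ := hyU
    have hnear := hproj m (hMQ hmM) v hvN (by linarith) hvd
    rw [hnear] at hxnear
    simp only [mem_singleton_iff] at hxnear
    rw [hxnear]
    exact hmM
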